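/- Let ξ be a fuzzy interval with left component ξₗ non-decreasing right-continuous and right component ξᵣ non-increasing left-continuous, and let λ ∈ ℝ. Then the fuzzy sum of the crisp number δ_λ with ξ satisfies (λ⊕ξ)(x) = ξ(x−λ), where the sum is defined via generalized inverses: (λ⊕ξ)ₗ = (λ + (ξₗ)⁻¹_inf)⁻¹_sup and (λ⊕ξ)ᵣ = (λ + (ξᵣ)⁻¹_sup)⁻¹_inf. -/
import Mathlib


open Set

noncomputable def ginvInf (f : ℝ → ℝ) (α : ℝ) : ℝ := sInf {x | α ≤ f x}

noncomputable def reinvSup (h : ℝ → ℝ) (x : ℝ) : ℝ := sSup {α ∈ Ioc (0:ℝ) 1 | h α ≤ x}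

noncomputable def ginvSup (f : ℝ → ℝ) (α : ℝ) : ℝ := sSup {x | α ≤ f x}

noncomputable def reinvInf (h : ℝ → ℝ) (x : ℝ) : ℝ := sSup {α ∈ Ioc (0:ℝ) 1 | x ≤ h α}

lemma key_mono (f : ℝ → ℝ) (hmono : Monotone f)
    (hrc : ∀ x, ContinuousWithinAt f (Ici x) x)
    (hmap : ∀ x, f x ∈ Icc (0:ℝ) 1)
    (hsupp : ∃ l, ∀ x < l, f x = 0)
    (hone : ∃ m, f m = 1)
    (y : ℝ) : sSup {α ∈ Ioc (0:ℝ) 1 | ginvInf f α ≤ y} = f y := by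
  obtain ⟨l, hl⟩ := hsupp
  obtain ⟨m, hm⟩ := hone
  have hiff : ∀ α ∈ Ioc (0:ℝ) 1, (ginvInf f α ≤ y ↔ α ≤ f y) := by
    intro α hα
    set A := {x | α ≤ f x} with hA
    have hne : A.Nonempty := ⟨m, by simp [hA, hm, hα.2]⟩
    have hbdd : BddBelow A := ⟨l, fun x hx => by
      by_contra h
      push_neg at h
      have h0 := hl x h
      have : α ≤ f x := hx
      rw [h0] at this
      exact absurd this (not_le.2 hα.1)⟩
    have hsub : A ⊆ Ici (sInf A) := fun x hx => csInf_le hbdd hx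
    have hcl : sInf A ∈ closure A := by
      have := isGLB_csInf hne hbdd
      exact this.mem_closure hne
    have hnb : (nhdsWithin (sInf A) A).NeBot := mem_closure_iff_nhdsWithin_neBot.1 hcl
    have htd : Filter.Tendsto f (nhdsWithin (sInf A) A) (nhds (f (sInf A))) :=
      (hrc (sInf A)).mono_left (nhdsWithin_mono _ hsub)
    have hinf : α ≤ f (sInf A) :=
      ge_of_tendsto htd (Filter.eventually_of_mem self_mem_nhdsWithin (fun x hx => hx))
    constructor
    · intro h; exact le_trans hinf (hmono h)
    · intro h; exact csInf_le hbdd h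
  have hset : {α ∈ Ioc (0:ℝ) 1 | ginvInf f α ≤ y} = Ioc 0 (f y) := by
    ext α
    simp only [mem_setOf_eq, mem_Ioc]
    constructor
    · rintro ⟨⟨h0, h1⟩, h⟩
      exact ⟨h0, (hiff α ⟨h0, h1⟩).1 h⟩
    · rintro ⟨h0, h1⟩
      have h1' : α ≤ 1 := le_trans h1 (hmap y).2
      exact ⟨⟨h0, h1'⟩, (hiff α ⟨h0, h1'⟩).2 h1⟩
  rw [hset]
  rcases eq_or_lt_of_le (hmap y).1 with h | h
  · rw [← h]; simp [Real.sSup_empty]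
  · exact csSup_Ioc h

lemma key_anti (f : ℝ → ℝ) (hanti : Antitone f)
    (hlc : ∀ x, ContinuousWithinAt f (Iic x) x)
    (hmap : ∀ x, f x ∈ Icc (0:ℝ) 1)
    (hsupp : ∃ r, ∀ x, r < x → f x = 0)
    (hone : ∃ m, f m = 1)
    (y : ℝ) : sSup {α ∈ Ioc (0:ℝ) 1 | y ≤ ginvSup f α} = f y := by
  obtain ⟨r, hr⟩ := hsupp
  obtain ⟨m, hm⟩ := hone
  have hiff : ∀ α ∈ Ioc (0:ℝ) 1, (y ≤ ginvSup f α ↔ α ≤ f y) := by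
    intro α hα
    set A := {x | α ≤ f x} with hA
    have hne : A.Nonempty := ⟨m, by simp [hA, hm, hα.2]⟩
    have hbdd : BddAbove A := ⟨r, fun x hx => by
      by_contra h
      push_neg at h
      have h0 := hr x h
      have : α ≤ f x := hx
      rw [h0] at this
      exact absurd this (not_le.2 hα.1)⟩
    have hsub : A ⊆ Iic (sSup A) := fun x hx => le_csSup hbdd hx
    have hcl : sSup A ∈ closure A := by
      have := isLUB_csSup hne hbdd
      exact this.mem_closure hne
    have hnb : (nhdsWithin (sSup A) A).NeBot := mem_closure_iff_nhdsWithin_neBot.1 hcl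
    have htd : Filter.Tendsto f (nhdsWithin (sSup A) A) (nhds (f (sSup A))) :=
      (hlc (sSup A)).mono_left (nhdsWithin_mono _ hsub)
    have hsup : α ≤ f (sSup A) :=
      ge_of_tendsto htd (Filter.eventually_of_mem self_mem_nhdsWithin (fun x hx => hx))
    constructor
    · intro h; exact le_trans hsup (hanti h)
    · intro h; exact le_csSup hbdd h
  have hset : {α ∈ Ioc (0:ℝ) 1 | y ≤ ginvSup f α} = Ioc 0 (f y) := by
    ext α
    simp only [mem_setOf_eq, mem_Ioc]
    constructor
    · rintro ⟨⟨h0, h1⟩, h⟩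
      exact ⟨h0, (hiff α ⟨h0, h1⟩).1 h⟩
    · rintro ⟨h0, h1⟩
      have h1' : α ≤ 1 := le_trans h1 (hmap y).2
      exact ⟨⟨h0, h1'⟩, (hiff α ⟨h0, h1'⟩).2 h1⟩
  rw [hset]
  rcases eq_or_lt_of_le (hmap y).1 with h | h
  · rw [← h]; simp [Real.sSup_empty]
  · exact csSup_Ioc h

theorem scalar_addition_to_fuzzy_interval (ξl ξr : ℝ → ℝ) (lam : ℝ)
    (hξlmono : Monotone ξl)
    (hξlrc : ∀ x : ℝ, ContinuousWithinAt ξl (Ici x) x)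
    (hξlmap : ∀ x, ξl x ∈ Icc (0:ℝ) 1)
    (hξlsupp : ∃ l : ℝ, ∀ x < l, ξl x = 0)
    (hξlone : ∃ m : ℝ, ξl m = 1)
    (hξranti : Antitone ξr)
    (hξrlc : ∀ x : ℝ, ContinuousWithinAt ξr (Iic x) x)
    (hξrmap : ∀ x, ξr x ∈ Icc (0:ℝ) 1)
    (hξrsupp : ∃ r : ℝ, ∀ x, r < x → ξr x = 0)
    (hξrone : ∃ m : ℝ, ξr m = 1) :
    (∀ x : ℝ, reinvSup (fun α => lam + ginvInf ξl α) x = ξl (x - lam)) ∧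
    (∀ x : ℝ, reinvInf (fun α => lam + ginvSup ξr α) x = ξr (x - lam)) := by
  constructor
  · intro x
    have hset : {α ∈ Ioc (0:ℝ) 1 | lam + ginvInf ξl α ≤ x}
        = {α ∈ Ioc (0:ℝ) 1 | ginvInf ξl α ≤ x - lam} := by
      ext α; simp [le_sub_iff_add_le']
    rw [reinvSup, hset]
    exact key_mono ξl hξlmono hξlrc hξlmap hξlsupp hξlone (x - lam)
  · intro x
    have hset : {α ∈ Ioc (0:ℝ) 1 | x ≤ lam + ginvSup ξr α}
        = {α ∈ Ioc (0:ℝ) 1 | x - lam ≤ ginvSup ξr α} := by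
      ext α; simp only [mem_setOf_eq]; constructor <;> rintro ⟨h1, h2⟩ <;> exact ⟨h1, by linarith⟩
    rw [reinvInf, hset]
    exact key_anti ξr hξranti hξrlc hξrmap hξrsupp hξrone (x - lam)
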